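/- The equilibrium of the closed-loop RFM with negative feedback is unique in the unit cube: if p, q ∈ [0,1]^n satisfy f(p) = 0 and f(q) = 0, then p = q. -/
import Mathlib


open scoped BigOperators

/-- Extend a vector `x : Fin n → ℝ` to a function on `ℕ` (zero outside the range). -/
noncomputable def extVec {n : ℕ} (x : Fin n → ℝ) (j : ℕ) : ℝ :=
  if h : j < n then x ⟨j, h⟩ else 0

/-- The flow from site `j` to site `j+1` (1-based paper indexing of the rates;
`j = 0` is the initiation flow, `j = n` is the exit flow) in the closed-loop
ribosome flow model with negative feedback `u = k g(y)`. Densities are stored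
0-based: Lean index `i` corresponds to the paper's site `i+1`. -/
noncomputable def rfmFlow (n : ℕ) (lam : ℕ → ℝ) (k : ℝ) (g : ℝ → ℝ)
    (x : Fin n → ℝ) (j : ℕ) : ℝ :=
  if j = 0 then lam 0 * k * g (lam n * extVec x (n - 1)) * (1 - extVec x 0)
  else if j = n then lam n * extVec x (n - 1)
  else lam j * extVec x (j - 1) * (1 - extVec x j)

/-- The vector field of the closed-loop RFM with negative feedback. -/
noncomputable def rfmField (n : ℕ) (lam : ℕ → ℝ) (k : ℝ) (g : ℝ → ℝ)
    (x : Fin n → ℝ) : Fin n → ℝ :=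
  fun i => rfmFlow n lam k g x i.val - rfmFlow n lam k g x (i.val + 1)

namespace RFMAux

variable {n : ℕ} {lam : ℕ → ℝ} {k : ℝ} {g : ℝ → ℝ} {x : Fin n → ℝ}

lemma ext_mem (hx : ∀ i, x i ∈ Set.Icc (0:ℝ) 1) (j : ℕ) :
    0 ≤ extVec x j ∧ extVec x j ≤ 1 := by
  unfold extVec
  split
  · exact ⟨(hx _).1, (hx _).2⟩
  · norm_num

lemma flow_zero : rfmFlow n lam k g x 0
    = lam 0 * k * g (lam n * extVec x (n - 1)) * (1 - extVec x 0) := by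
  simp [rfmFlow]

lemma flow_top (hn : n ≠ 0) : rfmFlow n lam k g x n = lam n * extVec x (n - 1) := by
  simp [rfmFlow, hn]

lemma flow_mid {j : ℕ} (h1 : j ≠ 0) (h2 : j ≠ n) :
    rfmFlow n lam k g x j = lam j * extVec x (j - 1) * (1 - extVec x j) := by
  simp [rfmFlow, h1, h2]

lemma flows_const (hx : rfmField n lam k g x = 0) :
    ∀ j ≤ n, rfmFlow n lam k g x j = rfmFlow n lam k g x 0 := by
  intro j
  induction j with
  | zero => intro _; rfl
  | succ m ih =>
    intro h
    have hm : m < n := by omega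
    have h0 := congrFun hx ⟨m, hm⟩
    simp only [rfmField, Pi.zero_apply] at h0
    have h1 : rfmFlow n lam k g x (m + 1) = rfmFlow n lam k g x m := by linarith
    rw [h1]
    exact ih (by omega)

/-- every flow equals the exit flow `R = lam n * x (n-1)`. -/
lemma flow_eq_R (hn : 2 ≤ n) (hx : rfmField n lam k g x = 0) :
    ∀ j ≤ n, rfmFlow n lam k g x j = lam n * extVec x (n - 1) := by
  intro j hj
  rw [flows_const hx j hj, ← flows_const hx n le_rfl, flow_top (by omega)]

/-- At an equilibrium in the cube, the flow is positive. -/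
lemma R_pos (hn : 2 ≤ n) (hlam : ∀ i, i ≤ n → 0 < lam i) (hk : 0 < k)
    (hgpos : ∀ z : ℝ, 0 ≤ z → 0 < g z)
    (hx : ∀ i, x i ∈ Set.Icc (0:ℝ) 1) (hxe : rfmField n lam k g x = 0) :
    0 < lam n * extVec x (n - 1) := by
  by_contra hR
  push_neg at hR
  have hln := hlam n le_rfl
  have hb := ext_mem hx (n - 1)
  have hXn : extVec x (n - 1) = 0 := by nlinarith
  have hall : ∀ j < n, extVec x j = 1 := by
    intro j
    induction j with
    | zero =>
      intro _
      have h0 := flow_eq_R hn hxe 0 (by omega)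
      rw [flow_zero] at h0
      have hg0 : 0 < g 0 := hgpos 0 le_rfl
      have hl0 := hlam 0 (by omega)
      have hA : 0 < lam 0 * k * g 0 := by positivity
      have hR0 : lam n * extVec x (n - 1) = 0 := by rw [hXn, mul_zero]
      rw [hR0] at h0
      rcases mul_eq_zero.mp h0 with h | h
      · exact absurd h (ne_of_gt hA)
      · linarith
    | succ m ih =>
      intro h
      have hXm := ih (by omega)
      have h0 := flow_eq_R hn hxe (m + 1) (by omega)
      rw [flow_mid (by omega) (by omega)] at h0
      simp only [Nat.add_sub_cancel] at h0
      rw [hXm, hXn] at h0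
      have hl := hlam (m + 1) (by omega)
      nlinarith
  have := hall (n - 1) (by omega)
  rw [hXn] at this
  norm_num at this

/-- At an equilibrium in the cube, all densities are strictly between 0 and 1. -/
lemma interior (hn : 2 ≤ n) (hlam : ∀ i, i ≤ n → 0 < lam i) (hk : 0 < k)
    (hgpos : ∀ z : ℝ, 0 ≤ z → 0 < g z)
    (hx : ∀ i, x i ∈ Set.Icc (0:ℝ) 1) (hxe : rfmField n lam k g x = 0) :
    ∀ j < n, 0 < extVec x j ∧ extVec x j < 1 := by
  have hR := R_pos hn hlam hk hgpos hx hxe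
  have hln := hlam n le_rfl
  intro j hj
  constructor
  · rcases eq_or_ne j (n - 1) with hje | hje
    · subst hje; nlinarith
    · -- j ≤ n - 2 : use flow j+1
      have h0 := flow_eq_R hn hxe (j + 1) (by omega)
      rw [flow_mid (by omega) (by omega)] at h0
      simp only [Nat.add_sub_cancel] at h0
      have hl := hlam (j + 1) (by omega)
      have hb1 := ext_mem hx (j + 1)
      have hb0 := ext_mem hx j
      nlinarith [mul_nonneg hl.le (sub_nonneg.2 hb1.2)]
  · rcases eq_or_ne j 0 with hje | hje
    · subst hje
      have h0 := flow_eq_R hn hxe 0 (by omega)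
      rw [flow_zero] at h0
      have hg0 : 0 < g (lam n * extVec x (n - 1)) :=
        hgpos _ (mul_nonneg hln.le (ext_mem hx (n - 1)).1)
      have hl0 := hlam 0 (by omega)
      nlinarith [mul_pos (mul_pos hl0 hk) hg0]
    · have h0 := flow_eq_R hn hxe j (by omega)
      rw [flow_mid hje (by omega)] at h0
      have hl := hlam j (by omega)
      have hb1 := ext_mem hx (j - 1)
      have hb0 := ext_mem hx j
      nlinarith [mul_nonneg hl.le hb1.1]

/-- Monotonicity: if the exit flow of `p` is at most that of `q`, then `p ≤ q`
componentwise. -/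
lemma mono (hn : 2 ≤ n) (hlam : ∀ i, i ≤ n → 0 < lam i)
    (p q : Fin n → ℝ)
    (hp : ∀ i, p i ∈ Set.Icc (0:ℝ) 1) (hq : ∀ i, q i ∈ Set.Icc (0:ℝ) 1)
    (hpe : rfmField n lam k g p = 0) (hqe : rfmField n lam k g q = 0)
    (hqlt : ∀ j < n, extVec q j < 1)
    (hR : lam n * extVec p (n - 1) ≤ lam n * extVec q (n - 1)) :
    ∀ j < n, extVec p j ≤ extVec q j := by
  have hln := hlam n le_rfl
  have key : ∀ m, m < n → extVec p (n - 1 - m) ≤ extVec q (n - 1 - m) := by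
    intro m
    induction m with
    | zero =>
      intro _
      simpa using le_of_mul_le_mul_left hR hln
    | succ m ih =>
      intro h
      have hPQ := ih (by omega)
      set i := n - 1 - (m + 1) with hi
      have hi1 : n - 1 - m = i + 1 := by omega
      rw [hi1] at hPQ
      have hP := flow_eq_R hn hpe (i + 1) (by omega)
      have hQ := flow_eq_R hn hqe (i + 1) (by omega)
      rw [flow_mid (by omega) (by omega)] at hP hQ
      simp only [Nat.add_sub_cancel] at hP hQ
      have hl := hlam (i + 1) (by omega)
      have hq1 : extVec q (i + 1) < 1 := hqlt (i + 1) (by omega)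
      have hbP := ext_mem hp i
      have hbQ := ext_mem hq i
      nlinarith [mul_nonneg (mul_nonneg hl.le hbP.1) (sub_nonneg.2 hPQ),
        mul_pos hl (by linarith : (0:ℝ) < 1 - extVec q (i + 1))]
  intro j hj
  have h1 : n - 1 - (n - 1 - j) = j := by omega
  have := key (n - 1 - j) (by omega)
  rwa [h1] at this

lemma g_strictAnti (hg : ContDiff ℝ 1 g) (hgder : ∀ z : ℝ, 0 < z → deriv g z < 0) :
    StrictAntiOn g (Set.Ici 0) := by
  apply strictAntiOn_of_deriv_neg (convex_Ici 0) hg.continuous.continuousOn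
  intro z hz
  rw [interior_Ici] at hz
  exact hgder z hz

/-- The exit flows of two equilibria cannot be strictly ordered. -/
lemma not_R_lt (hn : 2 ≤ n) (hlam : ∀ i, i ≤ n → 0 < lam i) (hk : 0 < k)
    (hg : ContDiff ℝ 1 g) (hgpos : ∀ z : ℝ, 0 ≤ z → 0 < g z)
    (hgder : ∀ z : ℝ, 0 < z → deriv g z < 0)
    (p q : Fin n → ℝ)
    (hp : ∀ i, p i ∈ Set.Icc (0:ℝ) 1) (hq : ∀ i, q i ∈ Set.Icc (0:ℝ) 1)
    (hpe : rfmField n lam k g p = 0) (hqe : rfmField n lam k g q = 0)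
    (h : lam n * extVec p (n - 1) < lam n * extVec q (n - 1)) : False := by
  have hRp := R_pos hn hlam hk hgpos hp hpe
  have hqI := interior hn hlam hk hgpos hq hqe
  have hle := mono hn hlam p q hp hq hpe hqe (fun j hj => (hqI j hj).2) h.le
  have hP0 := flow_eq_R hn hpe 0 (by omega)
  have hQ0 := flow_eq_R hn hqe 0 (by omega)
  rw [flow_zero] at hP0 hQ0
  have hganti := g_strictAnti hg hgder
  have hglt : g (lam n * extVec q (n - 1)) < g (lam n * extVec p (n - 1)) :=
    hganti (Set.mem_Ici.2 hRp.le) (Set.mem_Ici.2 (by linarith)) h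
  have hgq : 0 < g (lam n * extVec q (n - 1)) := hgpos _ (by linarith)
  have hq0 : extVec q 0 < 1 := (hqI 0 (by omega)).2
  have hp0 : extVec p 0 ≤ extVec q 0 := hle 0 (by omega)
  have hl0 := hlam 0 (by omega)
  have hA : 0 < lam 0 * k := by positivity
  nlinarith [mul_pos (mul_pos hA (sub_pos.2 hglt)) (sub_pos.2 (lt_of_le_of_lt hp0 hq0)),
    mul_nonneg (mul_nonneg hA.le hgq.le) (sub_nonneg.2 hp0)]

end RFMAux

/-- The equilibrium of the closed-loop RFM is unique in the
unit cube. -/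
theorem rfm_negfb_equilibrium_unique
    (n : ℕ) (hn : 2 ≤ n) (lam : ℕ → ℝ) (hlam : ∀ i, i ≤ n → 0 < lam i)
    (k : ℝ) (hk : 0 < k)
    (g : ℝ → ℝ) (hg : ContDiff ℝ 1 g) (hgpos : ∀ z : ℝ, 0 ≤ z → 0 < g z)
    (hgder : ∀ z : ℝ, 0 < z → deriv g z < 0)
    (p q : Fin n → ℝ)
    (hp : ∀ i, p i ∈ Set.Icc (0:ℝ) 1) (hq : ∀ i, q i ∈ Set.Icc (0:ℝ) 1)
    (hpe : rfmField n lam k g p = 0) (hqe : rfmField n lam k g q = 0) :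
    p = q := by
  have hReq : lam n * extVec p (n - 1) = lam n * extVec q (n - 1) := by
    rcases lt_trichotomy (lam n * extVec p (n - 1)) (lam n * extVec q (n - 1)) with h | h | h
    · exact absurd h (fun h =>
        RFMAux.not_R_lt hn hlam hk hg hgpos hgder p q hp hq hpe hqe h)
    · exact h
    · exact absurd h (fun h =>
        RFMAux.not_R_lt hn hlam hk hg hgpos hgder q p hq hp hqe hpe h)
  have hpI := RFMAux.interior hn hlam hk hgpos hp hpe
  have hqI := RFMAux.interior hn hlam hk hgpos hq hqe
  have h1 := RFMAux.mono hn hlam p q hp hq hpe hqe (fun j hj => (hqI j hj).2) hReq.le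
  have h2 := RFMAux.mono hn hlam q p hq hp hqe hpe (fun j hj => (hpI j hj).2) hReq.ge
  funext i
  have hi : i.val < n := i.isLt
  have he : ∀ (x : Fin n → ℝ), extVec x i.val = x i := by
    intro x; simp [extVec, hi]
  have := le_antisymm (h1 i.val hi) (h2 i.val hi)
  rwa [he, he] at this
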